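/- arXiv:2309.02831 — 2 statements merged into one kernel-verified Lean document; each statement's English description precedes it below -/
import Mathlib

section
/- Let R be a commutative ring with unity and x, y ∈ R. Then J_x = J_y (as subsets of R) if and only if (x) = (y). -/
/-- The annihilator `Ann(x) = {y ∈ R | x * y = 0}` of an element `x` of a
commutative ring `R`, as an ideal of `R`. -/
def ann {R : Type*} [CommRing R] (x : R) : Ideal R where
  carrier := {y : R | x * y = 0}
  add_mem' := by
    intro a b ha hb
    simp only [Set.mem_setOf_eq] at *
    rw [mul_add, ha, hb, add_zero]
  zero_mem' := by simp
  smul_mem' := by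
    intro c y hy
    simp only [smul_eq_mul, Set.mem_setOf_eq] at *
    rw [mul_comm c y, ← mul_assoc, hy, zero_mul]

/-- `J_x = {xu : u ∈ R, [u] a unit of R/Ann(x)}`. -/
def Jset {R : Type*} [CommRing R] (x : R) : Set R :=
  {z : R | ∃ u : R, z = x * u ∧ IsUnit (Ideal.Quotient.mk (ann x) u)}

lemma mem_ann_iff {R : Type*} [CommRing R] {x t : R} : t ∈ ann x ↔ x * t = 0 := Iff.rfl

lemma ann_eq_of_dvd {R : Type*} [CommRing R] {x y : R} (h1 : y ∣ x) (h2 : x ∣ y) :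
    ann x = ann y := by
  obtain ⟨a, ha⟩ := h1
  obtain ⟨b, hb⟩ := h2
  ext t
  rw [mem_ann_iff, mem_ann_iff]
  constructor
  · intro ht
    calc y * t = (x * t) * b := by rw [hb]; ring
    _ = 0 := by rw [ht, zero_mul]
  · intro ht
    calc x * t = (y * t) * a := by rw [ha]; ring
    _ = 0 := by rw [ht, zero_mul]

lemma Jset_subset {R : Type*} [CommRing R] {x y a b : R} (ha : x = y * a) (hb : y = x * b)
    (hann : ann x = ann y) : Jset x ⊆ Jset y := by
  rintro z ⟨u, rfl, hu⟩
  refine ⟨a * u, by rw [ha]; ring, ?_⟩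
  change IsUnit (Ideal.Quotient.mk (ann y) (a * u)); rw [← hann, map_mul]
  refine IsUnit.mul ?_ hu
  refine IsUnit.of_mul_eq_one (Ideal.Quotient.mk (ann x) b) ?_
  rw [← map_mul, ← map_one (Ideal.Quotient.mk (ann x)), Ideal.Quotient.mk_eq_mk_iff_sub_mem]
  rw [mem_ann_iff]
  calc x * (a * b - 1) = x * b * a - x := by ring
  _ = 0 := by rw [← hb, ← ha, sub_self]

/-- For `x, y` in a commutative ring, `J_x = J_y` iff `(x) = (y)`. -/
theorem Jset_eq_iff_span_eq {R : Type*} [CommRing R] (x y : R) :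
    Jset x = Jset y ↔ Ideal.span {x} = Ideal.span {y} := by
  constructor
  · intro h
    have hx : x ∈ Jset y := by
      rw [← h]; exact ⟨1, by simp⟩
    have hy : y ∈ Jset x := by
      rw [h]; exact ⟨1, by simp⟩
    obtain ⟨u, hu, -⟩ := hx
    obtain ⟨v, hv, -⟩ := hy
    apply le_antisymm <;> rw [Ideal.span_singleton_le_span_singleton]
    · exact ⟨u, hu⟩
    · exact ⟨v, hv⟩
  · intro h
    have h1 : y ∣ x := Ideal.span_singleton_le_span_singleton.mp h.le
    have h2 : x ∣ y := Ideal.span_singleton_le_span_singleton.mp h.ge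
    have hann := ann_eq_of_dvd h1 h2
    obtain ⟨a, ha⟩ := h1
    obtain ⟨b, hb⟩ := h2
    exact Set.Subset.antisymm (Jset_subset ha hb hann) (Jset_subset hb ha hann.symm)
end

section
/- Let S be a Dedekind domain, A an ideal of S, and R = S/A. Let e be an idempotent ideal of R (e² = e) with e = (x) for some x ∈ R, and let R_e = {y ∈ R : ε((y)) = e}. Then ⋂_{m≥1} R_e^m = {y ∈ R : (y) = e}, and this set is a group under the multiplication of R; hence each R_e is a stratified extension of a group, and the multiplicative semigroup of R is a semilattice of stratified extensions of groups. -/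
open Pointwise
open UniqueFactorizationMonoid

/-- `eps I` is the sum (supremum) of all idempotent ideals of `R` contained in
the ideal `I`. -/
def eps {R : Type*} [CommRing R] (I : Ideal R) : Ideal R :=
  sSup {J : Ideal R | J * J = J ∧ J ≤ I}

lemma eps_le {R : Type*} [CommRing R] (I : Ideal R) : eps I ≤ I :=
  sSup_le fun _ hJ => hJ.2

lemma le_eps {R : Type*} [CommRing R] {I J : Ideal R} (h1 : J * J = J) (h2 : J ≤ I) :
    J ≤ eps I := le_sSup ⟨h1, h2⟩

lemma eps_of_idem {R : Type*} [CommRing R] {I : Ideal R} (h : I * I = I) : eps I = I :=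
  le_antisymm (eps_le I) (le_eps h le_rfl)

lemma length_le_card_normalizedFactors {T : Type*} [CommRing T] [IsDedekindDomain T]
    [DecidableEq (Ideal T)] :
    ∀ (L : List (Ideal T)), (∀ I ∈ L, I ≠ ⊥) → (∀ I ∈ L, I ≠ ⊤) →
      L.length ≤ Multiset.card (normalizedFactors L.prod) := by
  intro L
  induction L with
  | nil => intro _ _; simp
  | cons I L ih =>
    intro h0 ht
    have hI0 : I ≠ (0 : Ideal T) := h0 I List.mem_cons_self
    have hL0 : L.prod ≠ 0 := List.prod_ne_zero (by
      intro h
      exact h0 0 (List.mem_cons_of_mem _ h) rfl)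
    have hcons : (I :: L).prod = I * L.prod := List.prod_cons
    rw [hcons, normalizedFactors_mul hI0 hL0, Multiset.card_add]
    have h1 : 1 ≤ Multiset.card (normalizedFactors I) := by
      have hpos : 0 < normalizedFactors I := (normalizedFactors_pos I hI0).mpr (by
        rw [Ideal.isUnit_iff]; exact ht I List.mem_cons_self)
      have := Multiset.card_lt_card hpos
      simp at this; omega
    have h2 := ih (fun J hJ => h0 J (List.mem_cons_of_mem _ hJ))
      (fun J hJ => ht J (List.mem_cons_of_mem _ hJ))
    simp [List.length_cons]; omega

lemma pow_sup_stab {S : Type*} [CommRing S] [IsDedekindDomain S] (A B : Ideal S) (hA : A ≠ ⊥) :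
    ∃ N : ℕ, 1 ≤ N ∧ ∀ n, N ≤ n → B ^ n ⊔ A = B ^ N ⊔ A := by
  classical
  by_cases hB : B = ⊥
  · refine ⟨1, le_rfl, fun n hn => ?_⟩
    subst hB
    rw [pow_one]
    have : (⊥ : Ideal S) ^ n = ⊥ := by
      simpa using pow_eq_zero_iff (M₀ := Ideal S) (Nat.one_le_iff_ne_zero.mp hn) |>.mpr rfl
    rw [this]
  · set N := Multiset.card (normalizedFactors A) + 1 with hN
    refine ⟨N, Nat.le_add_left 1 _, fun n hn => ?_⟩
    have hBn : B ^ n ≠ ⊥ := pow_ne_zero n hB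
    have hBN : B ^ N ≠ ⊥ := pow_ne_zero N hB
    rw [sup_eq_prod_inf_factors hBn hA, sup_eq_prod_inf_factors hBN hA]
    congr 1
    rw [normalizedFactors_pow, normalizedFactors_pow]
    ext P
    rw [Multiset.count_inter, Multiset.count_inter, Multiset.count_nsmul, Multiset.count_nsmul]
    rcases Nat.eq_zero_or_pos (Multiset.count P (normalizedFactors B)) with hc | hc
    · simp [hc]
    · have hPa : Multiset.count P (normalizedFactors A) < N := by
        have := Multiset.count_le_card P (normalizedFactors A)
        omega
      have h1 : Multiset.count P (normalizedFactors A) ≤ n * Multiset.count P (normalizedFactors B) := by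
        calc Multiset.count P (normalizedFactors A) ≤ N := le_of_lt hPa
        _ ≤ n := hn
        _ ≤ n * Multiset.count P (normalizedFactors B) := Nat.le_mul_of_pos_right n hc
      have h2 : Multiset.count P (normalizedFactors A) ≤ N * Multiset.count P (normalizedFactors B) := by
        calc Multiset.count P (normalizedFactors A) ≤ N := le_of_lt hPa
        _ ≤ N * Multiset.count P (normalizedFactors B) := Nat.le_mul_of_pos_right N hc
      rw [min_eq_right h1, min_eq_right h2]

lemma exists_pow_idem {S : Type*} [CommRing S] [IsDedekindDomain S] {A : Ideal S} (hA : A ≠ ⊥)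
    (I : Ideal (S ⧸ A)) : ∃ N : ℕ, 1 ≤ N ∧ I ^ N * I ^ N = I ^ N := by
  set π := Ideal.Quotient.mk A
  set B := Ideal.comap π I with hB
  have hmap : Ideal.map π B = I := Ideal.map_comap_of_surjective π Ideal.Quotient.mk_surjective I
  obtain ⟨N, hN1, hstab⟩ := pow_sup_stab A B hA
  refine ⟨N, hN1, ?_⟩
  have key : ∀ n, 1 ≤ n → I ^ n = Ideal.map π (B ^ n ⊔ A) := by
    intro n _
    rw [Ideal.map_sup, Ideal.map_pow, hmap, Ideal.map_quotient_self, sup_bot_eq]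
  have h2N : I ^ (N + N) = I ^ N := by
    rw [key (N + N) (by omega), key N hN1, hstab (N + N) (by omega)]
  rw [← pow_add, h2N]

/-- Let `S` be a Dedekind domain, `A` an ideal of `S`, `R = S/A`, and let `e` be
an idempotent ideal of `R` with `e = (x)`. For `R_e = {y ∈ R | ε((y)) = e}` one
has `⋂_{m ≥ 1} R_e^m = {y | (y) = e}`, and this set is a group under the
multiplication of `R`; hence each `R_e` is a stratified extension of a group and
the multiplicative semigroup of `R` is a semilattice of stratified extensions of
groups. -/
theorem base_Re_eq_and_group {S : Type*} [CommRing S] [IsDedekindDomain S] (A : Ideal S)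
    (e : Ideal (S ⧸ A)) (he : e * e = e) (x : S ⧸ A) (hx : e = Ideal.span {x}) :
    (⋂ m ∈ Set.Ici 1,
        ({y : S ⧸ A | eps (Ideal.span {y}) = e} : Set (S ⧸ A)) ^ m
      = {y : S ⧸ A | Ideal.span {y} = e}) ∧
    (∀ a ∈ {y : S ⧸ A | Ideal.span {y} = e}, ∀ b ∈ {y : S ⧸ A | Ideal.span {y} = e},
      a * b ∈ {y : S ⧸ A | Ideal.span {y} = e}) ∧
    (∃ i ∈ {y : S ⧸ A | Ideal.span {y} = e},
      (∀ a ∈ {y : S ⧸ A | Ideal.span {y} = e}, i * a = a) ∧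
      (∀ a ∈ {y : S ⧸ A | Ideal.span {y} = e},
        ∃ b ∈ {y : S ⧸ A | Ideal.span {y} = e}, a * b = i)) := by
  classical
  -- an idempotent generator of e
  have hxe : x ∈ e := hx ▸ Ideal.mem_span_singleton_self x
  obtain ⟨t, ht⟩ : ∃ t, t * (x * x) = x := by
    rw [← Ideal.mem_span_singleton', ← Ideal.span_singleton_mul_span_singleton, ← hx, he]
    exact hxe
  set ε : S ⧸ A := t * x with hεdef
  have hεidem : ε * ε = ε := by
    rw [hεdef]; linear_combination t * ht
  have hεe : ε ∈ e := hx ▸ Ideal.mem_span_singleton'.mpr ⟨t, rfl⟩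
  have he' : e = Ideal.span {ε} := by
    apply le_antisymm
    · rw [hx, Ideal.span_le, Set.singleton_subset_iff]
      refine Ideal.mem_span_singleton'.mpr ⟨x, ?_⟩
      have : x * ε = t * (x * x) := by rw [hεdef]; ring
      rw [this, ht]
    · rw [Ideal.span_le, Set.singleton_subset_iff]; exact hεe
  have hmem_e : ∀ z : S ⧸ A, z ∈ e ↔ ε * z = z := by
    intro z
    constructor
    · intro hz
      rw [he', Ideal.mem_span_singleton'] at hz
      obtain ⟨c, rfl⟩ := hz
      calc ε * (c * ε) = c * (ε * ε) := by ring
      _ = c * ε := by rw [hεidem]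
    · intro h
      rw [he']
      exact Ideal.mem_span_singleton'.mpr ⟨z, by rw [mul_comm]; exact h⟩
  have heps_e : eps e = e := eps_of_idem he
  refine ⟨?_, ?_, ?_⟩
  · -- the set equality
    ext y
    simp only [Set.mem_iInter, Set.mem_setOf_eq, Set.mem_Ici]
    constructor
    · intro hy
      have hy1 : eps (Ideal.span {y}) = e := by
        have := hy 1 le_rfl
        rwa [pow_one] at this
      have h_e_le : e ≤ Ideal.span {y} := by
        rw [← hy1]; exact eps_le _
      refine le_antisymm ?_ h_e_le
      rw [Ideal.span_le, Set.singleton_subset_iff, SetLike.mem_coe, hmem_e y]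
      by_cases hA : A = ⊥
      · subst hA
        haveI : (⊥ : Ideal S).IsPrime := Ideal.bot_prime
        haveI : IsDomain (S ⧸ (⊥ : Ideal S)) := Ideal.Quotient.isDomain ⊥
        have hx0 : x * (t * x - 1) = 0 := by
          have : x * (t * x - 1) = t * (x * x) - x := by ring
          rw [this, ht, sub_self]
        rcases mul_eq_zero.mp hx0 with hx0 | htx
        · -- e = ⊥
          have he0 : e = ⊥ := by rw [hx, hx0]; simp
          suffices hy0 : y = 0 by rw [hy0, mul_zero]
          by_contra hy0
          have hinj : Function.Injective (Ideal.Quotient.mk (⊥ : Ideal S)) := by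
            rw [RingHom.injective_iff_ker_eq_bot]; exact Ideal.mk_ker
          set φ := RingEquiv.ofBijective (Ideal.Quotient.mk (⊥ : Ideal S))
            ⟨hinj, Ideal.Quotient.mk_surjective⟩ with hφ
          set ψ := φ.symm with hψ
          set n := Multiset.card (normalizedFactors (Ideal.span {ψ y})) with hn
          obtain ⟨f, hf⟩ := Set.mem_pow.mp (hy (n + 1) (by omega))
          set l : List (S ⧸ (⊥ : Ideal S)) := List.ofFn (fun i => (f i : S ⧸ (⊥ : Ideal S)))
            with hl
          have hlen : l.length = n + 1 := by simp [hl]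
          have hlprod : l.prod = y := hf
          have hlX : ∀ z ∈ l, eps (Ideal.span {z}) = e := by
            intro z hz
            rw [hl, List.mem_ofFn] at hz
            obtain ⟨i, rfl⟩ := hz
            exact (f i).2
          have hlne : ∀ z ∈ l, z ≠ 0 := by
            intro z hz h0
            exact hy0 (by rw [← hlprod]; exact List.prod_eq_zero (h0 ▸ hz))
          have hlnu : ∀ z ∈ l, ¬ IsUnit z := by
            intro z hz hu
            have : Ideal.span {z} = ⊤ := Ideal.span_singleton_eq_top.mpr hu
            have h1 : eps (⊤ : Ideal (S ⧸ (⊥ : Ideal S))) = e := this ▸ hlX z hz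
            have h2 : eps (⊤ : Ideal (S ⧸ (⊥ : Ideal S))) = ⊤ :=
              eps_of_idem (by rw [Ideal.mul_top])
            rw [h2, he0] at h1
            exact top_ne_bot h1
          set L : List (Ideal S) := l.map (fun z => Ideal.span {ψ z}) with hL
          have hmapprod : ∀ (l' : List (S ⧸ (⊥ : Ideal S))),
              (l'.map (fun z => Ideal.span {ψ z})).prod = Ideal.span {ψ l'.prod} := by
            intro l'
            induction l' with
            | nil => simp [Ideal.one_eq_top]
            | cons a l' ih =>
              simp only [List.map_cons, List.prod_cons, ih,
                Ideal.span_singleton_mul_span_singleton, List.prod_cons, map_mul]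
          have hcount := length_le_card_normalizedFactors L
            (by
              intro I hI
              rw [hL, List.mem_map] at hI
              obtain ⟨z, hz, rfl⟩ := hI
              rw [Ne, Ideal.span_singleton_eq_bot]
              intro h0
              exact hlne z hz (by simpa using congrArg φ h0))
            (by
              intro I hI
              rw [hL, List.mem_map] at hI
              obtain ⟨z, hz, rfl⟩ := hI
              rw [Ne, Ideal.span_singleton_eq_top]
              intro hu
              exact hlnu z hz (by simpa using hu.map φ))
          rw [hL, hmapprod, hlprod, List.length_map, hlen] at hcount
          omega
        · -- ε = 1
          have hε1 : ε = 1 := by rw [hεdef]; linear_combination htx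
          rw [hε1, one_mul]
      · -- A ≠ ⊥ : Artinian-style argument
        obtain ⟨K, hK⟩ := IsNoetherianRing.isNilpotent_nilradical (S ⧸ A)
        have h1ε : (1 - ε) * (1 - ε) = 1 - ε := by linear_combination hεidem
        have key : ∀ z : S ⧸ A, eps (Ideal.span {z}) = e → IsNilpotent ((1 - ε) * z) := by
          intro z hz
          obtain ⟨N, hN1, hNidem⟩ := exists_pow_idem hA (Ideal.span {z})
          have hle : Ideal.span {z} ^ N ≤ e := by
            rw [← hz]
            exact le_eps hNidem (Ideal.pow_le_self (by omega))
          have hzN : z ^ N ∈ e := hle (Ideal.pow_mem_pow (Ideal.mem_span_singleton_self z) N)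
          have hεzN : ε * z ^ N = z ^ N := (hmem_e _).mp hzN
          refine ⟨N, ?_⟩
          have hpow : (1 - ε) ^ N = 1 - ε := by
            clear hεzN hzN hle hNidem
            induction N with
            | zero => omega
            | succ k ih =>
              rcases Nat.eq_zero_or_pos k with hk | hk
              · subst hk; rw [pow_one]
              · rw [pow_succ, ih (by omega), h1ε]
          rw [mul_pow, hpow]
          calc (1 - ε) * z ^ N = z ^ N - ε * z ^ N := by ring
          _ = 0 := by rw [hεzN, sub_self]
        set m := max K 1 with hm
        obtain ⟨f, hf⟩ := Set.mem_pow.mp (hy m (le_max_right K 1))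
        set l : List (S ⧸ A) := List.ofFn (fun i => (f i : S ⧸ A)) with hl
        have hlX : ∀ z ∈ l, eps (Ideal.span {z}) = e := by
          intro z hz
          rw [hl, List.mem_ofFn] at hz
          obtain ⟨i, rfl⟩ := hz
          exact (f i).2
        have hprod : ∀ (l' : List (S ⧸ A)), (∀ z ∈ l', eps (Ideal.span {z}) = e) →
            (1 - ε) * l'.prod ∈ (nilradical (S ⧸ A)) ^ l'.length := by
          intro l'
          induction l' with
          | nil => intro _; simp
          | cons a l' ih =>
            intro hmem
            have hsplit : (1 - ε) * (a :: l').prod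
                = ((1 - ε) * a) * ((1 - ε) * l'.prod) := by
              rw [List.prod_cons]
              linear_combination (-(a * l'.prod)) * h1ε
            rw [hsplit, List.length_cons, pow_succ']
            exact Ideal.mul_mem_mul
              (mem_nilradical.mpr (key a (hmem a List.mem_cons_self)))
              (ih (fun z hz => hmem z (List.mem_cons_of_mem _ hz)))
        have hy_mem : (1 - ε) * y ∈ (nilradical (S ⧸ A)) ^ m := by
          have := hprod l hlX
          rwa [hf, show l.length = m by simp [hl]] at this
        have hbot : (nilradical (S ⧸ A)) ^ m ≤ ⊥ := by
          have h1 : (nilradical (S ⧸ A)) ^ m ≤ (nilradical (S ⧸ A)) ^ K :=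
            Ideal.pow_le_pow_right (le_max_left K 1)
          rw [hK] at h1
          simpa using h1
        have h0 : (1 - ε) * y = 0 := by simpa using hbot hy_mem
        linear_combination -h0
    · intro hy
      have hyX : eps (Ideal.span {y}) = e := by rw [hy, heps_e]
      have hεX : eps (Ideal.span {ε}) = e := by rw [← he', heps_e]
      have hyε : ε * y = y := (hmem_e y).mp (by rw [← hy]; exact Ideal.mem_span_singleton_self y)
      intro m hm
      induction m, hm using Nat.le_induction with
      | base => rw [pow_one]; exact hyX
      | succ n hn ih =>
        rw [pow_succ]
        have hεX' : ε ∈ {y : S ⧸ A | eps (Ideal.span {y}) = e} := hεX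
        have := Set.mul_mem_mul ih hεX'
        rwa [mul_comm y ε, hyε] at this
  · -- closure under multiplication
    intro a ha b hb
    simp only [Set.mem_setOf_eq] at ha hb ⊢
    apply le_antisymm
    · rw [Ideal.span_le, Set.singleton_subset_iff]
      exact Ideal.mul_mem_right b e (ha ▸ Ideal.mem_span_singleton_self a)
    · rw [he', Ideal.span_le, Set.singleton_subset_iff]
      obtain ⟨c, hc⟩ := Ideal.mem_span_singleton'.mp (show ε ∈ Ideal.span {a} by
        rw [ha]; exact hεe)
      obtain ⟨d, hd⟩ := Ideal.mem_span_singleton'.mp (show ε ∈ Ideal.span {b} by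
        rw [hb]; exact hεe)
      refine Ideal.mem_span_singleton'.mpr ⟨c * d, ?_⟩
      calc c * d * (a * b) = (c * a) * (d * b) := by ring
      _ = ε * ε := by rw [hc, hd]
      _ = ε := hεidem
  · -- group structure
    refine ⟨ε, he'.symm, ?_, ?_⟩
    · intro a ha
      simp only [Set.mem_setOf_eq] at ha
      exact (hmem_e a).mp (by rw [← ha]; exact Ideal.mem_span_singleton_self a)
    · intro a ha
      simp only [Set.mem_setOf_eq] at ha
      obtain ⟨c, hc⟩ := Ideal.mem_span_singleton'.mp (show ε ∈ Ideal.span {a} by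
        rw [ha]; exact hεe)
      refine ⟨c * ε, ?_, ?_⟩
      · simp only [Set.mem_setOf_eq]
        apply le_antisymm
        · rw [Ideal.span_le, Set.singleton_subset_iff]
          exact (hmem_e (c * ε)).mpr (by calc ε * (c * ε) = c * (ε * ε) := by ring
            _ = c * ε := by rw [hεidem])
        · rw [he', Ideal.span_le, Set.singleton_subset_iff]
          refine Ideal.mem_span_singleton'.mpr ⟨a, ?_⟩
          calc a * (c * ε) = (c * a) * ε := by ring
          _ = ε * ε := by rw [hc]
          _ = ε := hεidem
      · calc a * (c * ε) = (c * a) * ε := by ring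
        _ = ε * ε := by rw [hc]
        _ = ε := hεidem
end
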